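/- Let A be a commutative ring, B a commutative A-algebra, and I an ideal of B such that B/Iⁿ is a flat A-module for every n ≥ 1. Let f ∈ B be a nonzerodivisor such that B/(f) is a flat A-module. Then for every integer n ≥ 1, both A-modules Iⁿ/(f·Iⁿ) and B/(f·Iⁿ) are flat, where f·Iⁿ denotes the ideal (f)·Iⁿ. -/

import Mathlib

open CharacterModule

section Aux

variable {R K M N : Type*} [CommRing R] [AddCommGroup K] [AddCommGroup M] [AddCommGroup N]
  [Module R K] [Module R M] [Module R N]

private theorem baer_retract {P Q : Type*} [AddCommGroup P] [AddCommGroup Q]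
    [Module R P] [Module R Q] (s : P →ₗ[R] Q) (r : Q →ₗ[R] P) (hrs : r ∘ₗ s = LinearMap.id)
    (hQ : Module.Baer R Q) : Module.Baer R P := by
  intro J g
  obtain ⟨G, hG⟩ := hQ J (s ∘ₗ g)
  refine ⟨r ∘ₗ G, fun x mem => ?_⟩
  have h1 := hG x mem
  simp only [LinearMap.comp_apply] at h1 ⊢
  rw [h1, ← LinearMap.comp_apply r s, hrs, LinearMap.id_apply]

private theorem baer_prod {P Q : Type*} [AddCommGroup P] [AddCommGroup Q]
    [Module R P] [Module R Q] (hP : Module.Baer R P) (hQ : Module.Baer R Q) :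
    Module.Baer R (P × Q) := by
  intro J g
  obtain ⟨G1, h1⟩ := hP J (LinearMap.fst R P Q ∘ₗ g)
  obtain ⟨G2, h2⟩ := hQ J (LinearMap.snd R P Q ∘ₗ g)
  refine ⟨G1.prod G2, fun x mem => ?_⟩
  have e1 := h1 x mem
  have e2 := h2 x mem
  simp only [LinearMap.comp_apply] at e1 e2
  simp [LinearMap.prod_apply, e1, e2]

/-- For a short exact sequence `0 → K → M → N → 0` with `N` flat, the character module of `M`
splits as a product. -/
private theorem char_equiv_of_ses (i : K →ₗ[R] M) (p : M →ₗ[R] N)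
    (hi : Function.Injective i) (hp : Function.Surjective p) (hex : Function.Exact i p)
    (hN : Module.Flat R N) :
    Nonempty (CharacterModule M ≃ₗ[R] CharacterModule N × CharacterModule K) := by
  have hdp : Function.Injective (dual (R := R) p) := by
    intro c c' h
    ext n
    obtain ⟨m, rfl⟩ := hp n
    exact DFunLike.congr_fun h m
  have hmid : ∀ c : CharacterModule M, dual (R := R) i c = 0 → ∃ c', dual (R := R) p c' = c := by
    intro c hc
    have hker : ∀ m : M, p m = 0 → c m = 0 := by
      intro m hm
      obtain ⟨k, rfl⟩ := (hex m).mp hm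
      exact DFunLike.congr_fun hc k
    have hpr : ∀ n, p (Function.surjInv hp n) = n := fun n => Function.surjInv_eq hp n
    refine ⟨AddMonoidHom.mk' (fun n => c (Function.surjInv hp n)) (fun a b => ?_), ?_⟩
    · show c (Function.surjInv hp (a + b)) = c (Function.surjInv hp a) + c (Function.surjInv hp b)
      have h0 : c (Function.surjInv hp (a + b) - Function.surjInv hp a - Function.surjInv hp b)
          = 0 := hker _ (by simp [hpr])
      rw [map_sub, map_sub, sub_sub, sub_eq_zero] at h0
      exact h0
    · ext m
      show c (Function.surjInv hp (p m)) = c m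
      have : c (Function.surjInv hp (p m) - m) = 0 := hker _ (by simp [hpr])
      rw [map_sub, sub_eq_zero] at this
      exact this
  obtain ⟨r, hr⟩ := (Module.Flat.iff_characterModule_baer.mp hN).extension_property
    (dual (R := R) p) hdp LinearMap.id
  have hri : ∀ c, r (dual (R := R) p c) = c := fun c => DFunLike.congr_fun hr c
  have hdi0 : ∀ c, dual (R := R) i (dual (R := R) p c) = 0 := by
    intro c
    ext k
    show c (p (i k)) = 0
    rw [hex.apply_apply_eq_zero, map_zero]
  refine ⟨LinearEquiv.ofBijective (r.prod (dual (R := R) i)) ⟨?_, ?_⟩⟩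
  · intro x y h
    simp only [LinearMap.prod_apply, Prod.mk.injEq, Function.prod] at h
    obtain ⟨h1, h2⟩ := h
    have : dual (R := R) i (x - y) = 0 := by rw [map_sub, h2, sub_self]
    obtain ⟨c', hc'⟩ := hmid _ this
    have : r (x - y) = 0 := by rw [map_sub, h1, sub_self]
    rw [← hc', hri] at this
    have := congrArg (dual (R := R) p) this
    rw [hc', map_zero] at this
    exact sub_eq_zero.mp this
  · rintro ⟨a, b⟩
    obtain ⟨x0, hx0⟩ := dual_surjective_of_injective i hi b
    refine ⟨x0 + dual (R := R) p (a - r x0), ?_⟩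
    simp only [LinearMap.prod_apply, Function.prod, map_add, hdi0, hx0, hri, map_sub]
    ext : 1 <;> simp [hx0]

/-- In a short exact sequence `0 → K → M → N → 0`, if `K` and `N` are flat then so is `M`. -/
private theorem flat_mid_of_ses (i : K →ₗ[R] M) (p : M →ₗ[R] N)
    (hi : Function.Injective i) (hp : Function.Surjective p) (hex : Function.Exact i p)
    (hK : Module.Flat R K) (hN : Module.Flat R N) : Module.Flat R M := by
  obtain ⟨e⟩ := char_equiv_of_ses i p hi hp hex hN
  refine Module.Flat.iff_characterModule_baer.mpr
    (baer_retract e.toLinearMap e.symm.toLinearMap (by ext x <;> simp) ?_)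
  exact baer_prod (Module.Flat.iff_characterModule_baer.mp hN)
    (Module.Flat.iff_characterModule_baer.mp hK)

/-- In a short exact sequence `0 → K → M → N → 0`, if `M` and `N` are flat then so is `K`. -/
private theorem flat_left_of_ses (i : K →ₗ[R] M) (p : M →ₗ[R] N)
    (hi : Function.Injective i) (hp : Function.Surjective p) (hex : Function.Exact i p)
    (hM : Module.Flat R M) (hN : Module.Flat R N) : Module.Flat R K := by
  obtain ⟨e⟩ := char_equiv_of_ses i p hi hp hex hN
  refine Module.Flat.iff_characterModule_baer.mpr
    (baer_retract (e.symm.toLinearMap ∘ₗ LinearMap.inr R _ _)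
      ((LinearMap.snd R _ _) ∘ₗ e.toLinearMap) (by ext x <;> simp) ?_)
  exact Module.Flat.iff_characterModule_baer.mp hM

end Aux

/-- Let `B` be a commutative `A`-algebra and `I ⊆ B` an ideal with `B/Iⁿ` flat over `A`
for all `n ≥ 1`. If `f ∈ B` is a nonzerodivisor with `B/(f)` flat over `A`, then for every
`n ≥ 1` both `Iⁿ/(f·Iⁿ)` and `B/(f·Iⁿ)` are flat `A`-modules. -/
theorem flat_of_pullback_cartier_divisor
    (A B : Type*) [CommRing A] [CommRing B] [Algebra A B] (I : Ideal B)
    (hflat : ∀ n : ℕ, 1 ≤ n → Module.Flat A (B ⧸ (I ^ n)))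
    (f : B) (hf : f ∈ nonZeroDivisors B)
    (hBf : Module.Flat A (B ⧸ (Ideal.span {f})))
    (n : ℕ) (hn : 1 ≤ n) :
    Module.Flat A ((↥(I ^ n)) ⧸
        (Submodule.comap (I ^ n).subtype (Ideal.span {f} * I ^ n))) ∧
    Module.Flat A (B ⧸ (Ideal.span {f} * I ^ n)) := by
  set J : Ideal B := I ^ n with hJ
  set fJ : Ideal B := Ideal.span {f} * J with hfJ
  -- multiplication by f, as a map B → B/fJ
  let i₀ : B →ₗ[B] B ⧸ fJ := f • fJ.mkQ
  have hi₀ : ∀ b : B, i₀ b = Submodule.Quotient.mk (f * b) := by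
    intro b
    show f • (Submodule.Quotient.mk b : B ⧸ fJ) = _
    rw [← Submodule.Quotient.mk_smul]
    rfl
  have hmemfJ : ∀ b : B, f * b ∈ fJ ↔ b ∈ J := by
    intro b
    constructor
    · intro hb
      obtain ⟨z, hz, hzb⟩ := Ideal.mem_span_singleton_mul.mp hb
      have h0 : f * (z - b) = 0 := by rw [mul_sub, hzb, sub_self]
      have hzb' : z - b = 0 := mem_nonZeroDivisors_iff_right.mp hf _ (by rwa [mul_comm] at h0)
      rwa [sub_eq_zero.mp hzb'] at hz
    · intro hb
      exact Ideal.mul_mem_mul (Ideal.mem_span_singleton_self f) hb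
  have hkeri₀ : LinearMap.ker i₀ = J := by
    ext b
    rw [LinearMap.mem_ker, hi₀, Submodule.Quotient.mk_eq_zero, hmemfJ]
  -- the injection B/J → B/fJ
  let i₁ : (B ⧸ J) →ₗ[B] B ⧸ fJ := Submodule.liftQ J i₀ hkeri₀.ge
  have hi₁ : Function.Injective i₁ := by
    intro x y hxy
    obtain ⟨a, rfl⟩ := Submodule.Quotient.mk_surjective _ x
    obtain ⟨b, rfl⟩ := Submodule.Quotient.mk_surjective _ y
    have h1 : i₀ a = i₀ b := hxy
    rw [hi₀, hi₀] at h1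
    have h2 : f * a - f * b ∈ fJ := (Submodule.Quotient.eq _).mp h1
    rw [← mul_sub, hmemfJ] at h2
    exact (Submodule.Quotient.eq _).mpr h2
  -- the projection B/fJ → B/(f)
  have hle1 : fJ ≤ Ideal.span {f} := Ideal.mul_le_left
  let p₁ : (B ⧸ fJ) →ₗ[B] B ⧸ Ideal.span {f} := Submodule.mapQ fJ _ LinearMap.id hle1
  have hp₁ : Function.Surjective p₁ := by
    intro x
    obtain ⟨b, rfl⟩ := Submodule.Quotient.mk_surjective _ x
    exact ⟨Submodule.Quotient.mk b, rfl⟩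
  have hex₁ : Function.Exact i₁ p₁ := by
    intro y
    constructor
    · intro hb
      obtain ⟨b, rfl⟩ := Submodule.Quotient.mk_surjective _ y
      have hb' : b ∈ Ideal.span {f} := by
        have : p₁ (Submodule.Quotient.mk b) = Submodule.Quotient.mk b := rfl
        rw [this, Submodule.Quotient.mk_eq_zero] at hb
        exact hb
      obtain ⟨c, rfl⟩ := Ideal.mem_span_singleton.mp hb'
      refine ⟨Submodule.Quotient.mk c, ?_⟩
      show i₀ c = _
      rw [hi₀]
    · rintro ⟨x, rfl⟩
      obtain ⟨c, rfl⟩ := Submodule.Quotient.mk_surjective _ x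
      show p₁ (i₀ c) = 0
      rw [hi₀]
      show Submodule.Quotient.mk (f * c) = (0 : B ⧸ Ideal.span {f})
      rw [Submodule.Quotient.mk_eq_zero]
      exact Ideal.mul_mem_right c _ (Ideal.mem_span_singleton_self f)
  -- flatness of B/fJ
  have hBJ : Module.Flat A (B ⧸ J) := hflat n hn
  have hmid : Module.Flat A (B ⧸ fJ) :=
    flat_mid_of_ses (i₁.restrictScalars A) (p₁.restrictScalars A) hi₁ hp₁ hex₁ hBJ hBf
  -- second SES : 0 → J/fJ → B/fJ → B/J → 0
  let i₂ : ((↥J) ⧸ (Submodule.comap J.subtype fJ)) →ₗ[B] B ⧸ fJ :=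
    Submodule.mapQ _ fJ J.subtype le_rfl
  have hi₂ : Function.Injective i₂ := by
    intro x y hxy
    obtain ⟨a, rfl⟩ := Submodule.Quotient.mk_surjective _ x
    obtain ⟨b, rfl⟩ := Submodule.Quotient.mk_surjective _ y
    have h1 : (Submodule.Quotient.mk (a : B) : B ⧸ fJ) = Submodule.Quotient.mk (b : B) := hxy
    have h2 : (a : B) - (b : B) ∈ fJ := (Submodule.Quotient.eq _).mp h1
    refine (Submodule.Quotient.eq _).mpr ?_
    show ((a - b : ↥J) : B) ∈ fJ
    rwa [Submodule.coe_sub]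
  have hle2 : fJ ≤ J := Ideal.mul_le_right
  let p₂ : (B ⧸ fJ) →ₗ[B] B ⧸ J := Submodule.mapQ fJ J LinearMap.id hle2
  have hp₂ : Function.Surjective p₂ := by
    intro x
    obtain ⟨b, rfl⟩ := Submodule.Quotient.mk_surjective _ x
    exact ⟨Submodule.Quotient.mk b, rfl⟩
  have hex₂ : Function.Exact i₂ p₂ := by
    intro y
    constructor
    · intro hb
      obtain ⟨b, rfl⟩ := Submodule.Quotient.mk_surjective _ y
      have hb' : b ∈ J := by
        have : p₂ (Submodule.Quotient.mk b) = Submodule.Quotient.mk b := rfl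
        rw [this, Submodule.Quotient.mk_eq_zero] at hb
        exact hb
      exact ⟨Submodule.Quotient.mk ⟨b, hb'⟩, rfl⟩
    · rintro ⟨x, rfl⟩
      obtain ⟨c, rfl⟩ := Submodule.Quotient.mk_surjective _ x
      show p₂ (Submodule.Quotient.mk (c : B)) = 0
      show (Submodule.Quotient.mk (c : B) : B ⧸ J) = 0
      rw [Submodule.Quotient.mk_eq_zero]
      exact c.2
  have hleft : Module.Flat A ((↥J) ⧸ (Submodule.comap J.subtype fJ)) :=
    flat_left_of_ses (i₂.restrictScalars A) (p₂.restrictScalars A) hi₂ hp₂ hex₂ hmid hBJ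
  exact ⟨hleft, hmid⟩
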